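/- arXiv:1602.07402 — 5 statements merged into one kernel-verified Lean document; each statement's English description precedes it below -/
import Mathlib

section
/- Let R be a commutative ring and q ∈ R an invertible element such that q^n − 1 is not a zero divisor in R for every integer n > 0. Then the center of the quantum torus over R with parameter q (generated by X^{±1}, Y^{±1} with YX = qXY) equals R·1. -/
/-- If `q ∈ R` is a unit such that `q^n - 1` is not a zero divisor for every `n > 0`,
then the center of the quantum torus over `R` with parameter `q` is `R·1`.
The quantum torus is encoded as any `R`-algebra `S` with an `R`-basis
`{X^m Y^n : (m,n) ∈ ℤ × ℤ}` whose multiplication satisfies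
`(X^{m₁}Y^{n₁})(X^{m₂}Y^{n₂}) = q^{n₁ m₂} X^{m₁+m₂} Y^{n₁+n₂}`. -/
theorem quantum_torus_center_trivial
    {R : Type*} [CommRing R] (q : Rˣ)
    (hq : ∀ n : ℕ, 0 < n → ∀ r : R, r * ((q : R) ^ n - 1) = 0 → r = 0)
    {S : Type*} [Ring S] [Algebra R S] (B : Module.Basis (ℤ × ℤ) R S)
    (hmul : ∀ m₁ n₁ m₂ n₂ : ℤ,
      B (m₁, n₁) * B (m₂, n₂) =
        (((q ^ (n₁ * m₂) : Rˣ) : R)) • B (m₁ + m₂, n₁ + n₂)) :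
    Subalgebra.center R S = ⊥ := by
  -- q^n * c = c with n > 0 forces c = 0
  have key : ∀ n : ℤ, 0 < n → ∀ c : R, ((q ^ n : Rˣ) : R) * c = c → c = 0 := by
    intro n hn c hc
    apply hq n.toNat (by omega) c
    have hv : ((q ^ n : Rˣ) : R) = (q : R) ^ n.toNat := by
      conv_lhs => rw [← Int.toNat_of_nonneg hn.le]
      rw [zpow_natCast, Units.val_pow_eq_pow_val]
    rw [mul_sub, mul_one, ← hv, mul_comm, hc, sub_self]
  have key' : ∀ n : ℤ, n ≠ 0 → ∀ c : R, ((q ^ n : Rˣ) : R) * c = c → c = 0 := by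
    intro n hn c hc
    rcases hn.lt_or_gt with h | h
    · apply key (-n) (by omega) c
      have h2 := congrArg (fun x => ((q ^ (-n) : Rˣ) : R) * x) hc
      simp only [← mul_assoc, ← Units.val_mul, ← zpow_add q] at h2
      simp only [neg_add_cancel, zpow_zero, Units.val_one, one_mul] at h2
      exact h2.symm
    · exact key n h c hc
  -- coordinate formulas for multiplication by X = B (1,0) and Y = B (0,1)
  have hA : ∀ (m n : ℤ) (s : S),
      B.repr (s * B (1, 0)) (m + 1, n) = ((q ^ n : Rˣ) : R) * B.repr s (m, n) := by
    intro m n s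
    have heq : (B.coord (m + 1, n)).comp (LinearMap.mulRight R (B (1, 0)))
        = ((q ^ n : Rˣ) : R) • B.coord (m, n) := by
      apply B.ext
      rintro ⟨a, b⟩
      simp only [LinearMap.comp_apply, LinearMap.mulRight_apply, hmul, LinearMap.smul_apply,
        map_smul, Module.Basis.coord_apply, Module.Basis.repr_self, Finsupp.single_apply, smul_eq_mul]
      rcases eq_or_ne (a, b) (m, n) with h | h
      · rw [Prod.mk.injEq] at h
        obtain ⟨rfl, rfl⟩ := h
        rw [if_pos (by simp), if_pos rfl, mul_one, mul_one, mul_one]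
      · rw [if_neg (by simp only [ne_eq, Prod.mk.injEq, not_and] at h ⊢; omega),
          if_neg (by simpa using h), mul_zero, mul_zero]
    exact DFunLike.congr_fun heq s
  have hB : ∀ (m n : ℤ) (s : S),
      B.repr (B (1, 0) * s) (m + 1, n) = B.repr s (m, n) := by
    intro m n s
    have heq : (B.coord (m + 1, n)).comp (LinearMap.mulLeft R (B (1, 0)))
        = B.coord (m, n) := by
      apply B.ext
      rintro ⟨a, b⟩
      simp only [LinearMap.comp_apply, LinearMap.mulLeft_apply, hmul,
        map_smul, Module.Basis.coord_apply, Module.Basis.repr_self, Finsupp.single_apply, smul_eq_mul]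
      rcases eq_or_ne (a, b) (m, n) with h | h
      · rw [Prod.mk.injEq] at h
        obtain ⟨rfl, rfl⟩ := h
        rw [if_pos (by simp [add_comm]), if_pos rfl, mul_one]
        simp
      · rw [if_neg (by simp only [ne_eq, Prod.mk.injEq, not_and] at h ⊢; omega),
          if_neg (by simpa using h), mul_zero]
    exact DFunLike.congr_fun heq s
  have hC : ∀ (m n : ℤ) (s : S),
      B.repr (s * B (0, 1)) (m, n + 1) = B.repr s (m, n) := by
    intro m n s
    have heq : (B.coord (m, n + 1)).comp (LinearMap.mulRight R (B (0, 1)))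
        = B.coord (m, n) := by
      apply B.ext
      rintro ⟨a, b⟩
      simp only [LinearMap.comp_apply, LinearMap.mulRight_apply, hmul,
        map_smul, Module.Basis.coord_apply, Module.Basis.repr_self, Finsupp.single_apply, smul_eq_mul]
      rcases eq_or_ne (a, b) (m, n) with h | h
      · rw [Prod.mk.injEq] at h
        obtain ⟨rfl, rfl⟩ := h
        rw [if_pos (by simp), if_pos rfl, mul_one]
        simp
      · rw [if_neg (by simp only [ne_eq, Prod.mk.injEq, not_and] at h ⊢; omega),
          if_neg (by simpa using h), mul_zero]
    exact DFunLike.congr_fun heq s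
  have hD : ∀ (m n : ℤ) (s : S),
      B.repr (B (0, 1) * s) (m, n + 1) = ((q ^ m : Rˣ) : R) * B.repr s (m, n) := by
    intro m n s
    have heq : (B.coord (m, n + 1)).comp (LinearMap.mulLeft R (B (0, 1)))
        = ((q ^ m : Rˣ) : R) • B.coord (m, n) := by
      apply B.ext
      rintro ⟨a, b⟩
      simp only [LinearMap.comp_apply, LinearMap.mulLeft_apply, hmul, LinearMap.smul_apply,
        map_smul, Module.Basis.coord_apply, Module.Basis.repr_self, Finsupp.single_apply, smul_eq_mul]
      rcases eq_or_ne (a, b) (m, n) with h | h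
      · rw [Prod.mk.injEq] at h
        obtain ⟨rfl, rfl⟩ := h
        rw [if_pos (by simp [add_comm]), if_pos rfl, mul_one, mul_one]
        simp
      · rw [if_neg (by simp only [ne_eq, Prod.mk.injEq, not_and] at h ⊢; omega),
          if_neg (by simpa using h), mul_zero, mul_zero]
    exact DFunLike.congr_fun heq s
  -- B (0,0) = 1
  have hone : B (0, 0) = (1 : S) := by
    have hL : LinearMap.mulLeft R (B (0, 0)) = LinearMap.id := by
      apply B.ext
      rintro ⟨a, b⟩
      simpa using hmul 0 0 a b
    have := DFunLike.congr_fun hL (1 : S)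
    simpa using this
  apply le_antisymm _ bot_le
  intro z hz
  rw [Subalgebra.mem_center_iff] at hz
  -- all coordinates of z outside (0,0) vanish
  have hcoord : ∀ p : ℤ × ℤ, p ≠ (0, 0) → B.repr z p = 0 := by
    rintro ⟨m, n⟩ hp
    rcases eq_or_ne n 0 with rfl | hn
    · have hm : m ≠ 0 := by simpa using hp
      apply key' m hm
      rw [← hD m 0 z, hz (B (0, 1)), hC]
    · apply key' n hn
      rw [← hA m n z, ← hz (B (1, 0)), hB]
  -- hence z is a scalar
  rw [Algebra.mem_bot]
  refine ⟨B.repr z (0, 0), ?_⟩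
  have hzz : z = (B.repr z (0, 0)) • B (0, 0) := by
    apply B.repr.injective
    ext p
    rcases eq_or_ne p (0, 0) with rfl | hp
    · simp
    · rw [map_smul, Finsupp.smul_apply, B.repr_self,
        Finsupp.single_eq_of_ne hp, smul_zero, hcoord p hp]
  rw [Algebra.algebraMap_eq_smul_one, ← hone]
  exact hzz.symm
end

section
/- Let M be a cancellative commutative monoid equipped with a linear order compatible with addition (a < b implies a + c < b + c), let R be an integral domain, and let σ : M × M → Rˣ be any function. Then the twisted monoid algebra, i.e., the free R-module with basis {e_m : m ∈ M} and multiplication e_a · e_b = σ(a,b) · e_{a+b} (assumed associative), has no nonzero zero divisors. -/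
/-- A twisted monoid algebra of a linearly ordered cancellative commutative monoid
over an integral domain has no nonzero zero divisors.  The algebra is encoded as any
`R`-algebra `S` (associativity is part of the ring structure) with an `R`-basis
`{e_m : m ∈ M}` satisfying `e_a · e_b = σ(a,b) e_{a+b}` for a function
`σ : M × M → Rˣ`. -/
theorem twisted_monoid_algebra_no_zero_divisors
    {R : Type*} [CommRing R] [IsDomain R]
    {M : Type*} [AddCancelCommMonoid M] [LinearOrder M]
    [CovariantClass M M (· + ·) (· < ·)]
    {S : Type*} [Ring S] [Algebra R S] (B : Module.Basis M R S)
    (σ : M × M → Rˣ)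
    (hmul : ∀ a b : M, B a * B b = ((σ (a, b) : R)) • B (a + b)) :
    ∀ x y : S, x ≠ 0 → y ≠ 0 → x * y ≠ 0 := by
  intro x y hx hy hxy
  set f := B.repr x with hf
  set g := B.repr y with hg
  have hfne : f.support.Nonempty := by
    rw [Finsupp.support_nonempty_iff]
    intro h
    exact hx (by simpa [hf, h] using (B.repr.map_eq_zero_iff.mp (by rw [← hf, h])))
  have hgne : g.support.Nonempty := by
    rw [Finsupp.support_nonempty_iff]
    intro h
    exact hy (B.repr.map_eq_zero_iff.mp (by rw [← hg, h]))
  set A := f.support.max' hfne with hA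
  set C := g.support.max' hgne with hC
  have key : ∀ a ∈ f.support, ∀ b ∈ g.support, a + b = A + C → a = A ∧ b = C := by
    intro a ha b hb hab
    have h1 : a ≤ A := Finset.le_max' _ _ ha
    have h2 : b ≤ C := Finset.le_max' _ _ hb
    have ha' : a = A := by
      by_contra h
      have hlt : a + b < A + b := by
        rw [add_comm a b, add_comm A b]
        exact add_lt_add_right (lt_of_le_of_ne h1 h) b
      have hle : A + b ≤ A + C := by
        rcases h2.lt_or_eq with h' | h'
        · exact (add_lt_add_right h' A).le
        · rw [h']
      exact absurd hab (hlt.trans_le hle).ne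
    exact ⟨ha', by subst ha'; exact add_left_cancel hab⟩
  have hx' : x = ∑ a ∈ f.support, f a • B a := by
    conv_lhs => rw [← B.linearCombination_repr x]
    rw [Finsupp.linearCombination_apply, Finsupp.sum]
  have hy' : y = ∑ b ∈ g.support, g b • B b := by
    conv_lhs => rw [← B.linearCombination_repr y]
    rw [Finsupp.linearCombination_apply, Finsupp.sum]
  have hxy' : x * y = ∑ a ∈ f.support, ∑ b ∈ g.support,
      (f a * g b * (σ (a, b) : R)) • B (a + b) := by
    rw [hx', hy', Finset.sum_mul]
    refine Finset.sum_congr rfl fun a _ => ?_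
    rw [Finset.mul_sum]
    refine Finset.sum_congr rfl fun b _ => ?_
    rw [smul_mul_smul_comm, hmul, ← smul_assoc]
    simp [mul_assoc, smul_smul]
  have hrepr : B.repr (x * y) (A + C) = f A * g C * (σ (A, C) : R) := by
    rw [hxy']
    rw [map_sum]
    rw [Finsupp.finset_sum_apply]
    rw [Finset.sum_eq_single_of_mem A (f.support.max'_mem hfne)]
    · rw [map_sum, Finsupp.finset_sum_apply]
      rw [Finset.sum_eq_single_of_mem C (g.support.max'_mem hgne)]
      · simp [Module.Basis.repr_self]
      · intro b hb hne
        have : ¬ (A + b = A + C) := fun h => hne (add_left_cancel h)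
        simp [Module.Basis.repr_self, Finsupp.single_apply, this]
    · intro a ha hne
      rw [map_sum, Finsupp.finset_sum_apply]
      refine Finset.sum_eq_zero fun b hb => ?_
      have : ¬ (a + b = A + C) := fun h => hne (key a ha b hb h).1
      simp [Module.Basis.repr_self, Finsupp.single_apply, this]
  have hfA : f A ≠ 0 := (f.mem_support_iff).mp (f.support.max'_mem hfne)
  have hgC : g C ≠ 0 := (g.mem_support_iff).mp (g.support.max'_mem hgne)
  have : B.repr (x * y) (A + C) = 0 := by rw [hxy]; simp
  rw [hrepr] at this
  exact (mul_ne_zero (mul_ne_zero hfA hgC) (σ (A, C)).ne_zero) this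
end

section
/- Let R be a commutative ring, A ∈ R a unit, and consider the free R-module T with basis {(n,t) : n ∈ ℤ_{>0}, t ∈ ℤ} ∪ {(0,t) : t ∈ ℤ_{≥0}}, with multiplication defined on basis elements with n_1, n_2 > 0 by (n_1,t_1)·(n_2,t_2) = A^{t_2 n_1 − t_1 n_2} (n_1+n_2, t_1+t_2), by (n,t)·(0,t') = Σ_{j=0}^{t'} C(t',j) A^{(t'−2j)n} (n, t+t'−2j), by (0,t')·(n,t) = Σ_{j=0}^{t'} C(t',j) A^{−(t'−2j)n} (n, t+t'−2j), and by (0,t)·(0,t') = (0,t+t'). Then this multiplication is associative. -/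
/-- Basis index set for the reduced skein algebra of the marked annulus:
pairs `(n,t)` with `n > 0, t ∈ ℤ`, together with `(0,t)` for `t ≥ 0`. -/
abbrev AnnulusIdx : Type := {p : ℕ × ℤ // 0 < p.1 ∨ 0 ≤ p.2}

/-- Structure constants of the reduced skein algebra of the marked annulus on the
basis `T(n,t)`:
`(n₁,t₁)·(n₂,t₂) = A^{t₂n₁ - t₁n₂}(n₁+n₂, t₁+t₂)` for `n₁,n₂ > 0`;
`(n,t)·(0,t') = Σⱼ C(t',j) A^{(t'-2j)n} (n, t+t'-2j)`;
`(0,t')·(n,t) = Σⱼ C(t',j) A^{-(t'-2j)n} (n, t+t'-2j)`;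
`(0,t)·(0,t') = (0, t+t')`. -/
noncomputable def annulusMulBasis {R : Type*} [CommRing R] (A : Rˣ)
    (a b : AnnulusIdx) : AnnulusIdx →₀ R :=
  if h1 : a.1.1 = 0 then
    if h2 : b.1.1 = 0 then
      Finsupp.single ⟨(0, a.1.2 + b.1.2),
        Or.inr (by have ha := a.2; have hb := b.2; omega)⟩ 1
    else
      ∑ j ∈ Finset.range (a.1.2.toNat + 1),
        Finsupp.single ⟨(b.1.1, b.1.2 + a.1.2 - 2 * j), Or.inl (by omega)⟩
          ((a.1.2.toNat.choose j : R) *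
            ((A ^ (-((a.1.2 - 2 * (j : ℤ)) * (b.1.1 : ℤ))) : Rˣ) : R))
  else
    if h2 : b.1.1 = 0 then
      ∑ j ∈ Finset.range (b.1.2.toNat + 1),
        Finsupp.single ⟨(a.1.1, a.1.2 + b.1.2 - 2 * j), Or.inl (by omega)⟩
          ((b.1.2.toNat.choose j : R) *
            ((A ^ ((b.1.2 - 2 * (j : ℤ)) * (a.1.1 : ℤ)) : Rˣ) : R))
    else
      Finsupp.single ⟨(a.1.1 + b.1.1, a.1.2 + b.1.2), Or.inl (by omega)⟩
        ((A ^ (b.1.2 * (a.1.1 : ℤ) - a.1.2 * (b.1.1 : ℤ)) : Rˣ) : R)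

/-- Multiplication on the reduced skein algebra of the marked annulus, the free
`R`-module on `AnnulusIdx`, extending the structure constants bilinearly. -/
noncomputable def annulusMul {R : Type*} [CommRing R] (A : Rˣ)
    (f g : AnnulusIdx →₀ R) : AnnulusIdx →₀ R :=
  f.sum fun a ra => g.sum fun b rb => (ra * rb) • annulusMulBasis A a b


open Finset in
lemma vand_sum {M : Type*} [AddCommMonoid M] (s s' : ℕ) (f : ℕ → M) :
    ∑ j ∈ range (s + 1), ∑ k ∈ range (s' + 1),
      (s.choose j * s'.choose k) • f (j + k)
    = ∑ m ∈ range (s + s' + 1), ((s + s').choose m) • f m := by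
  rw [← Finset.sum_product']
  rw [← Finset.sum_fiberwise_of_maps_to (g := fun p : ℕ × ℕ => p.1 + p.2)
      (t := range (s + s' + 1)) (by
        intro p hp
        simp only [mem_product, mem_range] at hp ⊢
        omega)]
  refine Finset.sum_congr rfl fun m hm => ?_
  have h1 : ∀ p ∈ (range (s+1) ×ˢ range (s'+1)).filter (fun p : ℕ × ℕ => p.1 + p.2 = m),
      (s.choose p.1 * s'.choose p.2) • f (p.1 + p.2)
        = (s.choose p.1 * s'.choose p.2) • f m := by
    intro p hp
    simp only [mem_filter] at hp
    rw [hp.2]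
  rw [Finset.sum_congr rfl h1, ← Finset.sum_smul, Nat.add_choose_eq]
  congr 1
  apply Finset.sum_subset
  · intro p hp
    simp only [mem_filter, mem_product, mem_range, Finset.HasAntidiagonal.mem_antidiagonal] at hp ⊢
    omega
  · intro p hp hnp
    simp only [mem_filter, mem_product, mem_range, Finset.HasAntidiagonal.mem_antidiagonal] at hp hnp
    have : s < p.1 ∨ s' < p.2 := by omega
    rcases this with h | h
    · rw [Nat.choose_eq_zero_of_lt h, zero_mul]
    · rw [Nat.choose_eq_zero_of_lt h, mul_zero]

noncomputable def annulusMulAux {R : Type*} [CommRing R] (A : Rˣ) :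
    (AnnulusIdx →₀ R) →ₗ[R] (AnnulusIdx →₀ R) →ₗ[R] (AnnulusIdx →₀ R) :=
  Finsupp.lsum R fun a => LinearMap.toSpanSingleton R _
    (Finsupp.lsum R fun b => LinearMap.toSpanSingleton R _ (annulusMulBasis A a b))

lemma annulusMulAux_single_single {R : Type*} [CommRing R] (A : Rˣ) (a b : AnnulusIdx)
    (r s : R) :
    annulusMulAux A (Finsupp.single a r) (Finsupp.single b s)
      = (r * s) • annulusMulBasis A a b := by
  simp [annulusMulAux, smul_smul]

lemma annulusMul_eq {R : Type*} [CommRing R] (A : Rˣ) (f g : AnnulusIdx →₀ R) :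
    annulusMul A f g = annulusMulAux A f g := by
  rw [annulusMul, annulusMulAux]
  rw [Finsupp.lsum_apply]
  rw [LinearMap.finsupp_sum_apply]
  refine Finsupp.sum_congr fun a _ => ?_
  rw [LinearMap.toSpanSingleton_apply, LinearMap.smul_apply, Finsupp.lsum_apply,
    Finsupp.smul_sum]
  exact Finsupp.sum_congr fun b _ => by
    rw [LinearMap.toSpanSingleton_apply, smul_smul]

lemma Aval {R : Type*} [CommRing R] (A : Rˣ) {x y z : ℤ} (h : x + y = z) :
    ((A ^ x : Rˣ) : R) * ((A ^ y : Rˣ) : R) = ((A ^ z : Rˣ) : R) := by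
  subst h; rw [zpow_add, Units.val_mul]

lemma sing_congr {R : Type*} [CommRing R] {p q : AnnulusIdx} (h1 : p.1.1 = q.1.1)
    (h2 : p.1.2 = q.1.2) {r s : R} (h : r = s) :
    Finsupp.single p r = Finsupp.single q s := by
  obtain ⟨⟨n1, t1⟩, _⟩ := p
  obtain ⟨⟨n2, t2⟩, _⟩ := q
  simp only at h1 h2
  subst h1; subst h2; subst h; rfl

lemma annulus_key {R : Type*} [CommRing R] (A : Rˣ) (a b c : AnnulusIdx) :
    annulusMulAux A (annulusMulBasis A a b) (Finsupp.single c 1)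
      = annulusMulAux A (Finsupp.single a 1) (annulusMulBasis A b c) := by
  obtain ⟨⟨na, ta⟩, pa⟩ := a
  obtain ⟨⟨nb, tb⟩, pb⟩ := b
  obtain ⟨⟨nc, tc⟩, pc⟩ := c
  by_cases ha : na = 0 <;> by_cases hb : nb = 0 <;> by_cases hc : nc = 0
  · -- 000
    subst ha; subst hb; subst hc
    simp only [annulusMulBasis, reduceDIte, annulusMulAux_single_single, one_mul, one_smul]
    exact sing_congr (by simp) (by simp; ring) rfl
  · -- 00+
    subst ha; subst hb
    have hta : 0 ≤ ta := by omega
    have htb : 0 ≤ tb := by omega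
    simp only [annulusMulBasis, dif_neg hc, reduceDIte,
      annulusMulAux_single_single, map_sum, LinearMap.coe_sum, Finset.sum_apply,
      Finsupp.smul_single', one_mul, mul_one, Finset.smul_sum, one_smul]
    refine Eq.symm ?_
    calc
      ∑ k ∈ Finset.range (tb.toNat + 1), ∑ j ∈ Finset.range (ta.toNat + 1),
          Finsupp.single (⟨(nc, tc + tb - 2*k + ta - 2*j), Or.inl (by omega)⟩ : AnnulusIdx)
            ((tb.toNat.choose k : R) * ((A ^ (-((tb - 2*(k:ℤ)) * (nc:ℤ))) : Rˣ) : R)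
              * ((ta.toNat.choose j : R) * ((A ^ (-((ta - 2*(j:ℤ)) * (nc:ℤ))) : Rˣ) : R)))
        = ∑ k ∈ Finset.range (tb.toNat + 1), ∑ j ∈ Finset.range (ta.toNat + 1),
            (tb.toNat.choose k * ta.toNat.choose j) •
              Finsupp.single (⟨(nc, tc + ta + tb - 2*(k+j)), Or.inl (by omega)⟩ : AnnulusIdx)
                ((A ^ (-((ta + tb - 2*((k+j:ℕ):ℤ)) * (nc:ℤ))) : Rˣ) : R) := by
          refine Finset.sum_congr rfl fun k hk => Finset.sum_congr rfl fun j hj => ?_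
          rw [Finsupp.smul_single, nsmul_eq_mul]
          refine sing_congr (by simp) (by simp; ring) ?_
          rw [mul_mul_mul_comm, Aval A rfl]
          push_cast
          congr 2
          ring
      _ = ∑ m ∈ Finset.range (tb.toNat + ta.toNat + 1),
            (tb.toNat + ta.toNat).choose m •
              Finsupp.single (⟨(nc, tc + ta + tb - 2*m), Or.inl (by omega)⟩ : AnnulusIdx)
                ((A ^ (-((ta + tb - 2*(m:ℤ)) * (nc:ℤ))) : Rˣ) : R) :=
          vand_sum tb.toNat ta.toNat
            (fun m => Finsupp.single (⟨(nc, tc + ta + tb - 2*m), Or.inl (by omega)⟩ : AnnulusIdx)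
              ((A ^ (-((ta + tb - 2*(m:ℤ)) * (nc:ℤ))) : Rˣ) : R))
      _ = ∑ m ∈ Finset.range ((ta + tb).toNat + 1),
            Finsupp.single (⟨(nc, tc + (ta + tb) - 2*m), Or.inl (by omega)⟩ : AnnulusIdx)
              (((ta + tb).toNat.choose m : R) * ((A ^ (-((ta + tb - 2*(m:ℤ)) * (nc:ℤ))) : Rˣ) : R)) := by
          have hN : (ta + tb).toNat = tb.toNat + ta.toNat := by omega
          rw [hN]
          refine Finset.sum_congr rfl fun m hm => ?_
          rw [Finsupp.smul_single, nsmul_eq_mul]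
          exact sing_congr (by simp) (by simp; ring) rfl
  · -- 0+0
    subst ha; subst hc
    simp only [annulusMulBasis, dif_neg hb, reduceDIte,
      annulusMulAux_single_single, map_sum, LinearMap.coe_sum, Finset.sum_apply,
      Finsupp.smul_single', one_mul, mul_one, Finset.smul_sum]
    rw [Finset.sum_comm]
    refine Finset.sum_congr rfl fun j hj => Finset.sum_congr rfl fun k hk => ?_
    refine sing_congr (by simp) (by simp; ring) ?_
    rw [mul_left_comm, mul_assoc, Aval A rfl]
    rw [mul_mul_mul_comm, Aval A rfl, ← mul_assoc]
    congr 2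
    ring
  · -- 0++
    subst ha
    have hbc : ¬(nb + nc = 0) := by omega
    simp only [annulusMulBasis, dif_neg hb, dif_neg hc, dif_neg hbc, reduceDIte,
      annulusMulAux_single_single, map_sum, LinearMap.coe_sum, Finset.sum_apply,
      Finsupp.smul_single', one_mul, mul_one, Finset.smul_sum]
    refine Finset.sum_congr rfl fun j hj => ?_
    refine sing_congr (by simp) (by simp; ring) ?_
    rw [mul_assoc, Aval A rfl, mul_left_comm, Aval A rfl]
    congr 2
    push_cast
    ring
  · -- +00
    subst hb; subst hc
    have htb : 0 ≤ tb := by omega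
    have htc : 0 ≤ tc := by omega
    simp only [annulusMulBasis, dif_neg ha, reduceDIte,
      annulusMulAux_single_single, map_sum, LinearMap.coe_sum, Finset.sum_apply,
      Finsupp.smul_single', one_mul, mul_one, Finset.smul_sum, one_smul]
    calc
      ∑ j ∈ Finset.range (tb.toNat + 1), ∑ k ∈ Finset.range (tc.toNat + 1),
          Finsupp.single (⟨(na, ta + tb - 2*j + tc - 2*k), Or.inl (by omega)⟩ : AnnulusIdx)
            ((tb.toNat.choose j : R) * ((A ^ ((tb - 2*(j:ℤ)) * (na:ℤ)) : Rˣ) : R)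
              * ((tc.toNat.choose k : R) * ((A ^ ((tc - 2*(k:ℤ)) * (na:ℤ)) : Rˣ) : R)))
        = ∑ j ∈ Finset.range (tb.toNat + 1), ∑ k ∈ Finset.range (tc.toNat + 1),
            (tb.toNat.choose j * tc.toNat.choose k) •
              Finsupp.single (⟨(na, ta + tb + tc - 2*(j+k)), Or.inl (by omega)⟩ : AnnulusIdx)
                ((A ^ ((tb + tc - 2*((j+k:ℕ):ℤ)) * (na:ℤ)) : Rˣ) : R) := by
          refine Finset.sum_congr rfl fun j hj => Finset.sum_congr rfl fun k hk => ?_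
          rw [Finsupp.smul_single, nsmul_eq_mul]
          refine sing_congr (by simp) (by simp; ring) ?_
          rw [mul_mul_mul_comm, Aval A rfl]
          push_cast
          congr 2
          ring
      _ = ∑ m ∈ Finset.range (tb.toNat + tc.toNat + 1),
            (tb.toNat + tc.toNat).choose m •
              Finsupp.single (⟨(na, ta + tb + tc - 2*m), Or.inl (by omega)⟩ : AnnulusIdx)
                ((A ^ ((tb + tc - 2*(m:ℤ)) * (na:ℤ)) : Rˣ) : R) :=
          vand_sum tb.toNat tc.toNat
            (fun m => Finsupp.single (⟨(na, ta + tb + tc - 2*m), Or.inl (by omega)⟩ : AnnulusIdx)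
              ((A ^ ((tb + tc - 2*(m:ℤ)) * (na:ℤ)) : Rˣ) : R))
      _ = ∑ m ∈ Finset.range ((tb + tc).toNat + 1),
            Finsupp.single (⟨(na, ta + (tb + tc) - 2*m), Or.inl (by omega)⟩ : AnnulusIdx)
              (((tb + tc).toNat.choose m : R) * ((A ^ ((tb + tc - 2*(m:ℤ)) * (na:ℤ)) : Rˣ) : R)) := by
          have hN : (tb + tc).toNat = tb.toNat + tc.toNat := by omega
          rw [hN]
          refine Finset.sum_congr rfl fun m hm => ?_
          rw [Finsupp.smul_single, nsmul_eq_mul]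
          exact sing_congr (by simp) (by simp; ring) rfl
  · -- +0+
    subst hb
    have hac : ¬(na + nc = 0) := by omega
    simp only [annulusMulBasis, dif_neg ha, dif_neg hc, dif_neg hac, reduceDIte,
      annulusMulAux_single_single, map_sum, LinearMap.coe_sum, Finset.sum_apply,
      Finsupp.smul_single', one_mul, mul_one, Finset.smul_sum]
    refine Finset.sum_congr rfl fun j hj => ?_
    refine sing_congr (by simp) (by simp; ring) ?_
    rw [mul_assoc, Aval A rfl, mul_assoc, Aval A rfl]
    congr 2
    ring
  · -- ++0
    subst hc
    have hab : ¬(na + nb = 0) := by omega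
    simp only [annulusMulBasis, dif_neg ha, dif_neg hb, dif_neg hab, reduceDIte,
      annulusMulAux_single_single, map_sum, LinearMap.coe_sum, Finset.sum_apply,
      Finsupp.smul_single', one_mul, mul_one, Finset.smul_sum]
    refine Finset.sum_congr rfl fun j hj => ?_
    refine sing_congr (by simp) (by simp; ring) ?_
    rw [mul_left_comm, Aval A rfl, mul_assoc, Aval A rfl]
    congr 2
    push_cast
    ring
  · -- +++
    have hab : ¬(na + nb = 0) := by omega
    have hbc : ¬(nb + nc = 0) := by omega
    simp only [annulusMulBasis, dif_neg ha, dif_neg hb, dif_neg hc, dif_neg hab, dif_neg hbc,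
      annulusMulAux_single_single, Finsupp.smul_single', one_mul, mul_one]
    refine sing_congr (by simp [add_assoc]) (by simp [add_assoc]) ?_
    rw [Aval A rfl, Aval A rfl]
    congr 1
    push_cast
    ring

/-- The multiplication of the reduced skein algebra of the marked annulus is
associative. -/
theorem annulusMul_assoc {R : Type*} [CommRing R] (A : Rˣ)
    (f g h : AnnulusIdx →₀ R) :
    annulusMul A (annulusMul A f g) h = annulusMul A f (annulusMul A g h) := by
  simp only [annulusMul_eq]
  induction f using Finsupp.induction_linear with
  | zero => simp
  | add f1 f2 hf1 hf2 => simp only [map_add, LinearMap.add_apply, hf1, hf2]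
  | single a ra =>
    induction g using Finsupp.induction_linear with
    | zero => simp
    | add g1 g2 hg1 hg2 =>
        simp only [map_add, LinearMap.add_apply, hg1, hg2]
    | single b rb =>
      induction h using Finsupp.induction_linear with
      | zero => simp
      | add h1 h2 hh1 hh2 => simp only [map_add, hh1, hh2]
      | single c rc =>
        have e : ∀ (x : AnnulusIdx) (r : R),
            Finsupp.single x r = r • Finsupp.single x (1:R) := fun x r => by
          rw [Finsupp.smul_single', mul_one]
        rw [e a ra, e b rb, e c rc]
        simp only [map_smul, LinearMap.smul_apply, smul_smul]
        rw [annulusMulAux_single_single, one_mul, one_smul,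
          annulusMulAux_single_single, one_mul, one_smul,
          annulus_key]
        ring_nf
end

section
/- Let R be a commutative ring, A ∈ R a unit, and let T be the algebra of the previous context (reduced skein algebra of the marked annulus with basis T(n,t)). If R is an integral domain, then T has no nonzero zero divisors. -/
/-- The "top" index of a product of basis elements. -/
def annulusTopIdx (a b : AnnulusIdx) : AnnulusIdx :=
  ⟨(a.1.1 + b.1.1, a.1.2 + b.1.2), by have := a.2; have := b.2; omega⟩

lemma annulusMulBasis_support_bound {R : Type*} [CommRing R] (A : Rˣ)
    (a b c : AnnulusIdx) (h : annulusMulBasis A a b c ≠ 0) :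
    c.1.1 = a.1.1 + b.1.1 ∧ c.1.2 ≤ a.1.2 + b.1.2 := by
  obtain ⟨⟨cn, ct⟩, hcp⟩ := c
  show cn = a.1.1 + b.1.1 ∧ ct ≤ a.1.2 + b.1.2
  rw [annulusMulBasis] at h
  split_ifs at h with h1 h2 h2
  · have hEq := (Finsupp.single_apply_ne_zero.mp h).1
    simp only [Subtype.mk.injEq, Prod.mk.injEq] at hEq
    omega
  · rw [Finset.sum_apply'] at h
    obtain ⟨j, hj, hterm⟩ := Finset.exists_ne_zero_of_sum_ne_zero h
    have hEq := (Finsupp.single_apply_ne_zero.mp hterm).1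
    simp only [Subtype.mk.injEq, Prod.mk.injEq] at hEq
    omega
  · rw [Finset.sum_apply'] at h
    obtain ⟨j, hj, hterm⟩ := Finset.exists_ne_zero_of_sum_ne_zero h
    have hEq := (Finsupp.single_apply_ne_zero.mp hterm).1
    simp only [Subtype.mk.injEq, Prod.mk.injEq] at hEq
    omega
  · have hEq := (Finsupp.single_apply_ne_zero.mp h).1
    simp only [Subtype.mk.injEq, Prod.mk.injEq] at hEq
    omega

lemma annulusMulBasis_top_ne_zero {R : Type*} [CommRing R] [IsDomain R] (A : Rˣ)
    (a b : AnnulusIdx) : annulusMulBasis A a b (annulusTopIdx a b) ≠ 0 := by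
  rw [annulusMulBasis]
  split_ifs with h1 h2 h2
  · rw [Finsupp.single_apply, if_pos (by
      apply Subtype.ext; rw [annulusTopIdx]; rw [Prod.mk.injEq]; omega)]
    exact one_ne_zero
  · rw [Finset.sum_apply']
    rw [Finset.sum_eq_single_of_mem 0 (Finset.mem_range.mpr (by omega))]
    · rw [Finsupp.single_apply, if_pos (by
        apply Subtype.ext; rw [annulusTopIdx]; rw [Prod.mk.injEq]
        constructor <;> push_cast <;> omega)]
      simp only [Nat.choose_zero_right, Nat.cast_one, one_mul]
      exact Units.ne_zero _
    · intro j hj hjne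
      apply Finsupp.single_eq_of_ne
      intro hEq
      rw [annulusTopIdx] at hEq
      simp only [Subtype.mk.injEq, Prod.mk.injEq] at hEq
      omega
  · rw [Finset.sum_apply']
    rw [Finset.sum_eq_single_of_mem 0 (Finset.mem_range.mpr (by omega))]
    · rw [Finsupp.single_apply, if_pos (by
        apply Subtype.ext; rw [annulusTopIdx]; rw [Prod.mk.injEq]
        constructor <;> push_cast <;> omega)]
      simp only [Nat.choose_zero_right, Nat.cast_one, one_mul]
      exact Units.ne_zero _
    · intro j hj hjne
      apply Finsupp.single_eq_of_ne
      intro hEq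
      rw [annulusTopIdx] at hEq
      simp only [Subtype.mk.injEq, Prod.mk.injEq] at hEq
      omega
  · rw [Finsupp.single_apply, if_pos (by
      apply Subtype.ext; rw [annulusTopIdx])]
    exact Units.ne_zero _

lemma annulusMulBasis_vanish {R : Type*} [CommRing R] (A : Rˣ) (a b a₀ b₀ : AnnulusIdx)
    (hA : toLex a.1 ≤ toLex a₀.1) (hB : toLex b.1 ≤ toLex b₀.1)
    (hne : ¬(a = a₀ ∧ b = b₀)) :
    annulusMulBasis A a b (annulusTopIdx a₀ b₀) = 0 := by
  by_contra h
  obtain ⟨h1, h2⟩ := annulusMulBasis_support_bound A a b _ h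
  rw [Prod.Lex.le_iff] at hA hB
  simp only [ofLex_toLex] at hA hB
  simp only [annulusTopIdx] at h1 h2
  apply hne
  have e : a.1.1 = a₀.1.1 ∧ a.1.2 = a₀.1.2 ∧ b.1.1 = b₀.1.1 ∧ b.1.2 = b₀.1.2 := by
    omega
  exact ⟨Subtype.ext (Prod.ext e.1 e.2.1), Subtype.ext (Prod.ext e.2.2.1 e.2.2.2)⟩

/-- If `R` is an integral domain, the reduced skein algebra of the marked annulus
has no nonzero zero divisors. -/
theorem annulusMul_no_zero_divisors {R : Type*} [CommRing R] [IsDomain R] (A : Rˣ)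
    (f g : AnnulusIdx →₀ R) (hf : f ≠ 0) (hg : g ≠ 0) :
    annulusMul A f g ≠ 0 := by
  intro hzero
  obtain ⟨a₀, ha₀, hamax⟩ := f.support.exists_max_image (fun a => toLex a.1)
    (Finsupp.support_nonempty_iff.mpr hf)
  obtain ⟨b₀, hb₀, hbmax⟩ := g.support.exists_max_image (fun b => toLex b.1)
    (Finsupp.support_nonempty_iff.mpr hg)
  have hc : annulusMul A f g (annulusTopIdx a₀ b₀) = 0 := by rw [hzero]; rfl
  rw [annulusMul] at hc
  simp only [Finsupp.sum, Finset.sum_apply', Finsupp.smul_apply, smul_eq_mul] at hc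
  rw [Finset.sum_eq_single_of_mem a₀ ha₀ (fun a ha hne => Finset.sum_eq_zero
    (fun b hb => by
      rw [annulusMulBasis_vanish A a b a₀ b₀ (hamax a ha) (hbmax b hb)
        (fun hc => hne hc.1), mul_zero]))] at hc
  rw [Finset.sum_eq_single_of_mem b₀ hb₀ (fun b hb hne => by
      rw [annulusMulBasis_vanish A a₀ b a₀ b₀ (le_refl _) (hbmax b hb)
        (fun hc => hne hc.2), mul_zero])] at hc
  exact mul_ne_zero (mul_ne_zero (Finsupp.mem_support_iff.mp ha₀)
    (Finsupp.mem_support_iff.mp hb₀)) (annulusMulBasis_top_ne_zero A a₀ b₀) hc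
end

section
/- Let R be an integral domain and let S be an associative R-algebra, free as an R-module with basis ℬ, equipped with a function w : ℬ → ℤ≥0 (weight) and a linear order ≺ on ℬ refining the weight (w(b) < w(b') implies b ≺ b'). Suppose that for all b, b' ∈ ℬ, the product b·b' is an R-linear combination of basis elements of weight at most w(b)+w(b'), and the coefficient in b·b' of some distinguished basis element μ(b,b') of weight exactly w(b)+w(b') is a unit, where μ(b,b') is the ≺-maximum basis element occurring, and μ is injective in each variable and strictly monotone: b_1 ≺ b_2 implies μ(b_1,b') ≺ μ(b_2,b') and μ(b',b_1) ≺ μ(b',b_2). Then S has no nonzero zero divisors. -/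
/-- Abstract leading-term argument.  Let `R` be an integral domain and `S` an
associative `R`-algebra, free with basis `ℬ` (indexed by `ι`), with a weight
`w : ι → ℕ` and a linear order on `ι` refining the weight.  Suppose each product
`B b · B b'` is supported in weights `≤ w b + w b'`, has a `≺`-maximum basis element
`μ b b'` of weight exactly `w b + w b'` occurring with unit coefficient, and `μ` is
strictly monotone in each argument (hence injective in each variable).  Then `S`
has no nonzero zero divisors. -/
theorem leading_term_no_zero_divisors
    {R : Type*} [CommRing R] [IsDomain R]
    {S : Type*} [Ring S] [Algebra R S]
    {ι : Type*} [LinearOrder ι] (B : Module.Basis ι R S) (w : ι → ℕ)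
    (hword : ∀ b b' : ι, w b < w b' → b < b')
    (μ : ι → ι → ι)
    (hwμ : ∀ b b' : ι, w (μ b b') = w b + w b')
    (hbound : ∀ b b' c : ι, B.repr (B b * B b') c ≠ 0 → w c ≤ w b + w b')
    (hmax : ∀ b b' c : ι, B.repr (B b * B b') c ≠ 0 → c ≤ μ b b')
    (hunit : ∀ b b' : ι, IsUnit (B.repr (B b * B b') (μ b b')))
    (hmono_left : ∀ b₁ b₂ b' : ι, b₁ < b₂ → μ b₁ b' < μ b₂ b')
    (hmono_right : ∀ b' b₁ b₂ : ι, b₁ < b₂ → μ b' b₁ < μ b' b₂) :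
    ∀ x y : S, x ≠ 0 → y ≠ 0 → x * y ≠ 0 := by
  intro x y hx hy hxy
  set fx := B.repr x with hfx
  set fy := B.repr y with hfy
  have hsx : fx.support.Nonempty := by
    rw [Finsupp.support_nonempty_iff]
    simpa [hfx] using hx
  have hsy : fy.support.Nonempty := by
    rw [Finsupp.support_nonempty_iff]
    simpa [hfy] using hy
  set b := fx.support.max' hsx with hb
  set b' := fy.support.max' hsy with hb'
  -- the mono in ≤ form
  have hle_left : ∀ c₁ c₂ c : ι, c₁ ≤ c₂ → μ c₁ c ≤ μ c₂ c := by
    intro c₁ c₂ c h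
    rcases h.lt_or_eq with h | h
    · exact (hmono_left _ _ _ h).le
    · rw [h]
  have hle_right : ∀ c c₁ c₂ : ι, c₁ ≤ c₂ → μ c c₁ ≤ μ c c₂ := by
    intro c c₁ c₂ h
    rcases h.lt_or_eq with h | h
    · exact (hmono_right _ _ _ h).le
    · rw [h]
  have hxsum : x = ∑ c ∈ fx.support, fx c • B c := by
    conv_lhs => rw [← B.linearCombination_repr x]
    rw [Finsupp.linearCombination_apply, Finsupp.sum]
  have hysum : y = ∑ c ∈ fy.support, fy c • B c := by
    conv_lhs => rw [← B.linearCombination_repr y]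
    rw [Finsupp.linearCombination_apply, Finsupp.sum]
  have hxy' : x * y = ∑ p ∈ fx.support ×ˢ fy.support, (fx p.1 * fy p.2) • (B p.1 * B p.2) := by
    rw [hxsum, hysum, Finset.sum_mul_sum, ← Finset.sum_product']
    exact Finset.sum_congr rfl fun p _ => by
      rw [smul_mul_assoc, mul_smul_comm, smul_smul]
  have key : B.repr (x * y) (μ b b') = (fx b * fy b') * B.repr (B b * B b') (μ b b') := by
    rw [hxy', map_sum, Finsupp.finset_sum_apply]
    rw [Finset.sum_eq_single (b, b')]
    · simp
    · rintro ⟨c, c'⟩ hmem hne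
      have hc : c ∈ fx.support := (Finset.mem_product.mp hmem).1
      have hc' : c' ∈ fy.support := (Finset.mem_product.mp hmem).2
      have hcb : c ≤ b := Finset.le_max' _ _ hc
      have hcb' : c' ≤ b' := Finset.le_max' _ _ hc'
      have hlt : μ c c' < μ b b' := by
        rcases hcb.lt_or_eq with h | h
        · exact lt_of_lt_of_le (hmono_left _ _ _ h) (hle_right _ _ _ hcb')
        · subst h
          rcases hcb'.lt_or_eq with h | h
          · exact hmono_right _ _ _ h
          · exact absurd (by rw [h]) hne
      have : B.repr (B c * B c') (μ b b') = 0 := by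
        by_contra h
        exact absurd (hmax _ _ _ h) (not_le.mpr hlt)
      simp [this]
    · intro h
      exact absurd (Finset.mk_mem_product (fx.support.max'_mem hsx) (fy.support.max'_mem hsy)) h
  have hz : fx b ≠ 0 := Finsupp.mem_support_iff.mp (fx.support.max'_mem hsx)
  have hz' : fy b' ≠ 0 := Finsupp.mem_support_iff.mp (fy.support.max'_mem hsy)
  have : B.repr (x * y) (μ b b') ≠ 0 := by
    rw [key]
    exact mul_ne_zero (mul_ne_zero hz hz') (hunit b b').ne_zero
  exact this (by rw [hxy]; simp)
end
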